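/- The Coxeter group W(F₄) of type F₄ is isomorphic to a semidirect product of the Coxeter group W(D₄) of type D₄ by the symmetric group Sym₃: there exists a group homomorphism φ from Sym₃ to the automorphism group of W(D₄) such that W(F₄) is isomorphic to the semidirect product W(D₄) ⋊_φ Sym₃. -/

import Mathlib

/-- The Coxeter matrix of type `D₄`: a central vertex (index 1) joined by edges of label `3`
to the three vertices 0, 2, 3, which pairwise commute (label `2`). -/
def coxMatD4 : CoxeterMatrix (Fin 4) where
  M := !![1, 3, 2, 2;
          3, 1, 3, 3;
          2, 3, 1, 2;
          2, 3, 2, 1]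
  off_diagonal := by intro i i' h; fin_cases i <;> fin_cases i' <;> simp_all

namespace Stmt9

open CoxeterMatrix CoxeterSystem Equiv SemidirectProduct

def csF : CoxeterSystem CoxeterMatrix.F₄ CoxeterMatrix.F₄.Group := CoxeterMatrix.F₄.toCoxeterSystem
def csD : CoxeterSystem coxMatD4 coxMatD4.Group := coxMatD4.toCoxeterSystem

def A2 : CoxeterMatrix (Fin 2) where
  M := !![1, 3; 3, 1]
  off_diagonal := by intro i i' h; fin_cases i <;> fin_cases i' <;> simp_all

def csA : CoxeterSystem A2 A2.Group := A2.toCoxeterSystem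

/-! ### Generic group helpers -/

theorem cube_sq {G : Type*} [Group G] {t : G} (h : t ^ 3 = 1) : t * t = t⁻¹ := by
  have h' : (t * t) * t = 1 := by
    rw [show t^3 = t*t*t by rw [pow_succ, pow_succ, pow_one]] at h; exact h
  exact eq_inv_of_mul_eq_one_left h'

theorem quar_sq {G : Type*} [Group G] {t : G} (h : t ^ 4 = 1) : (t * t) = (t * t)⁻¹ := by
  have h' : (t * t) * (t * t) = 1 := by
    rw [show t^4 = t*t*(t*t) by rw [pow_succ, pow_succ, pow_succ, pow_one, mul_assoc]] at h
    rw [← mul_assoc] at h ⊢; exact h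
  exact eq_inv_of_mul_eq_one_left h'

theorem sq_comm {G : Type*} [Group G] {u v : G} (hu : u⁻¹ = u) (hv : v⁻¹ = v)
    (h : (u * v) ^ 2 = 1) : u * v = v * u := by
  have h' : (u * v) * (u * v) = 1 := by rw [show (u*v)^2 = (u*v)*(u*v) from pow_two _] at h; exact h
  calc u * v = ((u*v))⁻¹ := eq_inv_of_mul_eq_one_left h'
  _ = v * u := by rw [mul_inv_rev, hu, hv]

theorem swap_pow {G : Type*} [Group G] {u v : G} {k : ℕ} (h : (u * v) ^ k = 1) :
    (v * u) ^ k = 1 := by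
  have hc : v * u = v * (u * v) * v⁻¹ := by group
  rw [hc, conj_pow, h, mul_one, mul_inv_cancel]

theorem pow_four_of_sq {G : Type*} [Monoid G] {X Y : G} (hsq : X ^ 2 = Y) (h : Y ^ 2 = 1) :
    X ^ 4 = 1 := by
  have h4 := pow_mul X 2 2
  norm_num at h4
  rw [h4, hsq, h]

theorem eq_of_mul_eq_one {G : Type*} [Group G] {X Y : G} (h1 : X * Y = 1) (h2 : Y * Y = 1) :
    X = Y := by
  have hx : X = Y⁻¹ := eq_inv_of_mul_eq_one_left h1
  rw [hx, inv_eq_of_mul_eq_one_left h2]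

/-! ### Word identities in `W(F₄)` -/

namespace F4W

theorem hab2 : csF.simple 0 * (csF.simple 1 * (csF.simple 0 * csF.simple 1))
    = csF.simple 1 * csF.simple 0 := by
  have h := cube_sq (csF.simple_mul_simple_pow 0 1)
  calc csF.simple 0 * (csF.simple 1 * (csF.simple 0 * csF.simple 1))
      = (csF.simple 0 * csF.simple 1) * (csF.simple 0 * csF.simple 1) := by
        simp only [mul_assoc]
  _ = (csF.simple 0 * csF.simple 1)⁻¹ := h
  _ = csF.simple 1 * csF.simple 0 := by
        rw [mul_inv_rev, CoxeterSystem.inv_simple, CoxeterSystem.inv_simple]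

theorem hba2 : csF.simple 1 * (csF.simple 0 * (csF.simple 1 * csF.simple 0))
    = csF.simple 0 * csF.simple 1 := by
  have h := cube_sq (csF.simple_mul_simple_pow 1 0)
  calc csF.simple 1 * (csF.simple 0 * (csF.simple 1 * csF.simple 0))
      = (csF.simple 1 * csF.simple 0) * (csF.simple 1 * csF.simple 0) := by
        simp only [mul_assoc]
  _ = (csF.simple 1 * csF.simple 0)⁻¹ := h
  _ = csF.simple 0 * csF.simple 1 := by
        rw [mul_inv_rev, CoxeterSystem.inv_simple, CoxeterSystem.inv_simple]

theorem hcd2 : csF.simple 2 * (csF.simple 3 * (csF.simple 2 * csF.simple 3))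
    = csF.simple 3 * csF.simple 2 := by
  have h := cube_sq (csF.simple_mul_simple_pow 2 3)
  calc csF.simple 2 * (csF.simple 3 * (csF.simple 2 * csF.simple 3))
      = (csF.simple 2 * csF.simple 3) * (csF.simple 2 * csF.simple 3) := by
        simp only [mul_assoc]
  _ = (csF.simple 2 * csF.simple 3)⁻¹ := h
  _ = csF.simple 3 * csF.simple 2 := by
        rw [mul_inv_rev, CoxeterSystem.inv_simple, CoxeterSystem.inv_simple]

theorem hdc2 : csF.simple 3 * (csF.simple 2 * (csF.simple 3 * csF.simple 2))
    = csF.simple 2 * csF.simple 3 := by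
  have h := cube_sq (csF.simple_mul_simple_pow 3 2)
  calc csF.simple 3 * (csF.simple 2 * (csF.simple 3 * csF.simple 2))
      = (csF.simple 3 * csF.simple 2) * (csF.simple 3 * csF.simple 2) := by
        simp only [mul_assoc]
  _ = (csF.simple 3 * csF.simple 2)⁻¹ := h
  _ = csF.simple 2 * csF.simple 3 := by
        rw [mul_inv_rev, CoxeterSystem.inv_simple, CoxeterSystem.inv_simple]

theorem hbc2 : csF.simple 1 * (csF.simple 2 * (csF.simple 1 * csF.simple 2))
    = csF.simple 2 * (csF.simple 1 * (csF.simple 2 * csF.simple 1)) := by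
  have h := quar_sq (csF.simple_mul_simple_pow 1 2)
  calc csF.simple 1 * (csF.simple 2 * (csF.simple 1 * csF.simple 2))
      = (csF.simple 1 * csF.simple 2) * (csF.simple 1 * csF.simple 2) := by
        simp only [mul_assoc]
  _ = ((csF.simple 1 * csF.simple 2) * (csF.simple 1 * csF.simple 2))⁻¹ := h
  _ = (csF.simple 1 * csF.simple 2)⁻¹ * (csF.simple 1 * csF.simple 2)⁻¹ := by rw [mul_inv_rev]
  _ = (csF.simple 2 * csF.simple 1) * (csF.simple 2 * csF.simple 1) := by
        rw [mul_inv_rev, CoxeterSystem.inv_simple, CoxeterSystem.inv_simple]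
  _ = csF.simple 2 * (csF.simple 1 * (csF.simple 2 * csF.simple 1)) := by
        simp only [mul_assoc]

theorem hac : csF.simple 0 * csF.simple 2 = csF.simple 2 * csF.simple 0 :=
  sq_comm (CoxeterSystem.inv_simple _ _) (CoxeterSystem.inv_simple _ _)
    (csF.simple_mul_simple_pow 0 2)

theorem had : csF.simple 0 * csF.simple 3 = csF.simple 3 * csF.simple 0 :=
  sq_comm (CoxeterSystem.inv_simple _ _) (CoxeterSystem.inv_simple _ _)
    (csF.simple_mul_simple_pow 0 3)

theorem hbd : csF.simple 1 * csF.simple 3 = csF.simple 3 * csF.simple 1 :=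
  sq_comm (CoxeterSystem.inv_simple _ _) (CoxeterSystem.inv_simple _ _)
    (csF.simple_mul_simple_pow 1 3)

-- pointed moves
theorem Pca (x : CoxeterMatrix.F₄.Group) :
    csF.simple 2 * (csF.simple 0 * x) = csF.simple 0 * (csF.simple 2 * x) := by
  rw [← mul_assoc, ← hac, mul_assoc]
theorem Pac (x : CoxeterMatrix.F₄.Group) :
    csF.simple 0 * (csF.simple 2 * x) = csF.simple 2 * (csF.simple 0 * x) := (Pca x).symm
theorem Pda (x : CoxeterMatrix.F₄.Group) :
    csF.simple 3 * (csF.simple 0 * x) = csF.simple 0 * (csF.simple 3 * x) := by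
  rw [← mul_assoc, ← had, mul_assoc]
theorem PdaE : csF.simple 3 * csF.simple 0 = csF.simple 0 * csF.simple 3 := had.symm
theorem Pdb (x : CoxeterMatrix.F₄.Group) :
    csF.simple 3 * (csF.simple 1 * x) = csF.simple 1 * (csF.simple 3 * x) := by
  rw [← mul_assoc, ← hbd, mul_assoc]
theorem PdbE : csF.simple 3 * csF.simple 1 = csF.simple 1 * csF.simple 3 := hbd.symm

theorem Bab (x : CoxeterMatrix.F₄.Group) :
    csF.simple 0 * (csF.simple 1 * (csF.simple 0 * (csF.simple 1 * x)))
    = csF.simple 1 * (csF.simple 0 * x) := by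
  have h : (csF.simple 0 * (csF.simple 1 * (csF.simple 0 * csF.simple 1))) * x
      = (csF.simple 1 * csF.simple 0) * x := by rw [hab2]
  simpa only [mul_assoc] using h
theorem Bcd (x : CoxeterMatrix.F₄.Group) :
    csF.simple 2 * (csF.simple 3 * (csF.simple 2 * (csF.simple 3 * x)))
    = csF.simple 3 * (csF.simple 2 * x) := by
  have h : (csF.simple 2 * (csF.simple 3 * (csF.simple 2 * csF.simple 3))) * x
      = (csF.simple 3 * csF.simple 2) * x := by rw [hcd2]
  simpa only [mul_assoc] using h
theorem Bdc (x : CoxeterMatrix.F₄.Group) :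
    csF.simple 3 * (csF.simple 2 * (csF.simple 3 * (csF.simple 2 * x)))
    = csF.simple 2 * (csF.simple 3 * x) := by
  have h : (csF.simple 3 * (csF.simple 2 * (csF.simple 3 * csF.simple 2))) * x
      = (csF.simple 2 * csF.simple 3) * x := by rw [hdc2]
  simpa only [mul_assoc] using h
theorem Edc (x : CoxeterMatrix.F₄.Group) :
    csF.simple 3 * (csF.simple 2 * x)
    = csF.simple 2 * (csF.simple 3 * (csF.simple 2 * (csF.simple 3 * x))) := (Bcd x).symm
theorem Bbc (x : CoxeterMatrix.F₄.Group) :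
    csF.simple 1 * (csF.simple 2 * (csF.simple 1 * (csF.simple 2 * x)))
    = csF.simple 2 * (csF.simple 1 * (csF.simple 2 * (csF.simple 1 * x))) := by
  have h : (csF.simple 1 * (csF.simple 2 * (csF.simple 1 * csF.simple 2))) * x
      = (csF.simple 2 * (csF.simple 1 * (csF.simple 2 * csF.simple 1))) * x := by rw [hbc2]
  simpa only [mul_assoc] using h


theorem w_PP : csF.simple 3 * (csF.simple 2 * (csF.simple 1 * (csF.simple 2 * (csF.simple 3 * (csF.simple 3 * (csF.simple 2 * (csF.simple 1 * (csF.simple 2 * (csF.simple 3))))))))) = 1 := by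
  rw [csF.simple_mul_simple_cancel_left 3, csF.simple_mul_simple_cancel_left 2, csF.simple_mul_simple_cancel_left 1, csF.simple_mul_simple_cancel_left 2, csF.simple_mul_simple_self 3]

theorem w_PaPaPa : csF.simple 3 * (csF.simple 2 * (csF.simple 1 * (csF.simple 2 * (csF.simple 3 * (csF.simple 0 * (csF.simple 3 * (csF.simple 2 * (csF.simple 1 * (csF.simple 2 * (csF.simple 3 * (csF.simple 0 * (csF.simple 3 * (csF.simple 2 * (csF.simple 1 * (csF.simple 2 * (csF.simple 3 * (csF.simple 0))))))))))))))))) = 1 := by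
  rw [Pda, csF.simple_mul_simple_cancel_left 3, Pca, csF.simple_mul_simple_cancel_left 2,
    Pda, csF.simple_mul_simple_cancel_left 3, Pca, csF.simple_mul_simple_cancel_left 2,
    PdaE, Pca, Bab, csF.simple_mul_simple_cancel_left 1,
    csF.simple_mul_simple_cancel_left 0, csF.simple_mul_simple_cancel_left 2,
    csF.simple_mul_simple_self 3]

theorem w_PbPb : csF.simple 3 * (csF.simple 2 * (csF.simple 1 * (csF.simple 2 * (csF.simple 3 * (csF.simple 1 * (csF.simple 3 * (csF.simple 2 * (csF.simple 1 * (csF.simple 2 * (csF.simple 3 * (csF.simple 1))))))))))) = 1 := by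
  rw [Pdb, csF.simple_mul_simple_cancel_left 3, PdbE, Bbc, csF.simple_mul_simple_cancel_left 1, csF.simple_mul_simple_cancel_left 2, csF.simple_mul_simple_cancel_left 2, csF.simple_mul_simple_cancel_left 1, csF.simple_mul_simple_self 3]

theorem w_PQPQ : csF.simple 3 * (csF.simple 2 * (csF.simple 1 * (csF.simple 2 * (csF.simple 3 * (csF.simple 2 * (csF.simple 1 * (csF.simple 2 * (csF.simple 3 * (csF.simple 2 * (csF.simple 1 * (csF.simple 2 * (csF.simple 3 * (csF.simple 2 * (csF.simple 1 * (csF.simple 2))))))))))))))) = 1 := by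
  rw [Edc, Pdb, Bdc, Pdb, Bdc, Pdb, Bdc, Pdb, Bbc, csF.simple_mul_simple_cancel_left 1, csF.simple_mul_simple_cancel_left 2, csF.simple_mul_simple_cancel_left 2, csF.simple_mul_simple_cancel_left 1, csF.simple_mul_simple_cancel_left 3, csF.simple_mul_simple_self 2]

theorem w_aQaQaQ : csF.simple 0 * (csF.simple 2 * (csF.simple 1 * (csF.simple 2 * (csF.simple 0 * (csF.simple 2 * (csF.simple 1 * (csF.simple 2 * (csF.simple 0 * (csF.simple 2 * (csF.simple 1 * (csF.simple 2))))))))))) = 1 := by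
  rw [Pca, csF.simple_mul_simple_cancel_left 2, Pca, csF.simple_mul_simple_cancel_left 2, Pac, Bab, csF.simple_mul_simple_cancel_left 0, csF.simple_mul_simple_cancel_left 1, csF.simple_mul_simple_self 2]

theorem w_bQbQ : csF.simple 1 * (csF.simple 2 * (csF.simple 1 * (csF.simple 2 * (csF.simple 1 * (csF.simple 2 * (csF.simple 1 * (csF.simple 2))))))) = 1 := by
  rw [Bbc, csF.simple_mul_simple_cancel_left 1, csF.simple_mul_simple_cancel_left 2, csF.simple_mul_simple_cancel_left 1, csF.simple_mul_simple_self 2]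

theorem w_QQ : csF.simple 2 * (csF.simple 1 * (csF.simple 2 * (csF.simple 2 * (csF.simple 1 * (csF.simple 2))))) = 1 := by
  rw [csF.simple_mul_simple_cancel_left 2, csF.simple_mul_simple_cancel_left 1, csF.simple_mul_simple_self 2]

theorem w_ababab : csF.simple 0 * (csF.simple 1 * (csF.simple 0 * (csF.simple 1 * (csF.simple 0 * (csF.simple 1))))) = 1 := by
  rw [Bab, csF.simple_mul_simple_cancel_left 0, csF.simple_mul_simple_self 1]

theorem w_cPcP : csF.simple 2 * (csF.simple 3 * (csF.simple 2 * (csF.simple 1 * (csF.simple 2 * (csF.simple 3 * (csF.simple 2 * (csF.simple 3 * (csF.simple 2 * (csF.simple 1 * (csF.simple 2 * (csF.simple 3))))))))))) = 1 := by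
  rw [Bcd, csF.simple_mul_simple_cancel_left 2, Pdb, csF.simple_mul_simple_cancel_left 1, Bcd, csF.simple_mul_simple_cancel_left 2, csF.simple_mul_simple_self 3]

theorem w_cdcdcd : csF.simple 2 * (csF.simple 3 * (csF.simple 2 * (csF.simple 3 * (csF.simple 2 * (csF.simple 3))))) = 1 := by
  rw [Bcd, csF.simple_mul_simple_cancel_left 2, csF.simple_mul_simple_self 3]

theorem w_caca : csF.simple 2 * (csF.simple 0 * (csF.simple 2 * (csF.simple 0))) = 1 := by
  rw [Pca, csF.simple_mul_simple_cancel_left 2, csF.simple_mul_simple_self 0]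
-- FAILED: [('w_PaPaPa', 'dcbcdadcbcdadcbcda'), ('w_aPaPaP', 'adcbcdadcbcdadcbcd')]


end F4W


-- derived identities
theorem HC1 : csF.simple 2 * ((csF.simple 3 * (csF.simple 2 * (csF.simple 1 *
    (csF.simple 2 * csF.simple 3)))) * csF.simple 2)
    = csF.simple 3 * (csF.simple 2 * (csF.simple 1 * (csF.simple 2 * csF.simple 3))) := by
  refine eq_of_mul_eq_one ?_ ?_
  · simp only [mul_assoc]; exact F4W.w_cPcP
  · simp only [mul_assoc]; exact F4W.w_PP

theorem HCw3 : csF.simple 2 * (csF.simple 3 * (csF.simple 2 * (csF.simple 3 * csF.simple 2)))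
    = csF.simple 3 := by
  refine eq_of_mul_eq_one ?_ ?_
  · simp only [mul_assoc]; exact F4W.w_cdcdcd
  · exact csF.simple_mul_simple_self 3

/-! ### The symmetric group side -/

namespace A2G

theorem w_xyxyxy : csA.simple 0 * (csA.simple 1 * (csA.simple 0 * (csA.simple 1 *
    (csA.simple 0 * csA.simple 1)))) = 1 := by
  have h := csA.simple_mul_simple_pow 0 1
  rw [show A2.M 0 1 = 3 from rfl] at h
  rw [pow_succ, pow_succ, pow_one] at h
  simpa only [mul_assoc] using h

theorem w_yxyxyx : csA.simple 1 * (csA.simple 0 * (csA.simple 1 * (csA.simple 0 *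
    (csA.simple 1 * csA.simple 0)))) = 1 := by
  have h := csA.simple_mul_simple_pow 1 0
  rw [show A2.M 1 0 = 3 from rfl] at h
  rw [pow_succ, pow_succ, pow_one] at h
  simpa only [mul_assoc] using h

theorem hyxy : (csA.simple 1 * csA.simple 0) * csA.simple 1
    = csA.simple 0 * (csA.simple 1 * csA.simple 0) := by
  refine eq_of_mul_eq_one ?_ ?_
  · simp only [mul_assoc]; exact w_yxyxyx
  · simp only [mul_assoc, CoxeterSystem.simple_mul_simple_cancel_left,
      CoxeterSystem.simple_mul_simple_self]

theorem hxyxy : (csA.simple 0 * (csA.simple 1 * csA.simple 0)) * csA.simple 1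
    = csA.simple 1 * csA.simple 0 := by
  have h1 : ((csA.simple 0 * (csA.simple 1 * csA.simple 0)) * csA.simple 1) *
      (csA.simple 0 * csA.simple 1) = 1 := by
    simp only [mul_assoc]; exact w_xyxyxy
  have h2 := eq_inv_of_mul_eq_one_left h1
  rw [mul_inv_rev, CoxeterSystem.inv_simple, CoxeterSystem.inv_simple] at h2
  exact h2

theorem mem_all (g : A2.Group) : g = 1 ∨ g = csA.simple 0 ∨ g = csA.simple 1 ∨
    g = csA.simple 0 * csA.simple 1 ∨ g = csA.simple 1 * csA.simple 0 ∨
    g = csA.simple 0 * (csA.simple 1 * csA.simple 0) := by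
  refine csA.simple_induction_right (p := fun g => g = 1 ∨ g = csA.simple 0 ∨ g = csA.simple 1 ∨
    g = csA.simple 0 * csA.simple 1 ∨ g = csA.simple 1 * csA.simple 0 ∨
    g = csA.simple 0 * (csA.simple 1 * csA.simple 0)) g (Or.inl rfl) ?_
  rintro w i (rfl | rfl | rfl | rfl | rfl | rfl) <;> fin_cases i
  · exact Or.inr (Or.inl (one_mul _))
  · exact Or.inr (Or.inr (Or.inl (one_mul _)))
  · exact Or.inl (csA.simple_mul_simple_self 0)
  · exact Or.inr (Or.inr (Or.inr (Or.inl rfl)))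
  · exact Or.inr (Or.inr (Or.inr (Or.inr (Or.inl rfl))))
  · exact Or.inl (csA.simple_mul_simple_self 1)
  · exact Or.inr (Or.inr (Or.inr (Or.inr (Or.inr (mul_assoc _ _ _)))))
  · exact Or.inr (Or.inl (csA.simple_mul_simple_cancel_right 1))
  · exact Or.inr (Or.inr (Or.inl (csA.simple_mul_simple_cancel_right 0)))
  · exact Or.inr (Or.inr (Or.inr (Or.inr (Or.inr hyxy))))
  · refine Or.inr (Or.inr (Or.inr (Or.inl ?_)))
    simp only [Fin.mk_zero, Fin.mk_one, mul_assoc,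
      CoxeterSystem.simple_mul_simple_cancel_left,
      CoxeterSystem.simple_mul_simple_self, mul_one]
  · exact Or.inr (Or.inr (Or.inr (Or.inr (Or.inl hxyxy))))

def θ : A2.Group →* Equiv.Perm (Fin 3) :=
  csA.lift ⟨![Equiv.swap 0 1, Equiv.swap 1 2], by intro i j; fin_cases i <;> fin_cases j <;> decide⟩

theorem θx : θ (csA.simple 0) = Equiv.swap 0 1 := csA.lift_apply_simple _ 0
theorem θy : θ (csA.simple 1) = Equiv.swap 1 2 := csA.lift_apply_simple _ 1

theorem θ_inj : Function.Injective θ := by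
  rw [injective_iff_map_eq_one]
  intro g hg
  rcases mem_all g with rfl | rfl | rfl | rfl | rfl | rfl
  · rfl
  · rw [θx] at hg; exact absurd hg (by decide)
  · rw [θy] at hg; exact absurd hg (by decide)
  · rw [map_mul, θx, θy] at hg; exact absurd hg (by decide)
  · rw [map_mul, θx, θy] at hg; exact absurd hg (by decide)
  · rw [map_mul, map_mul, θx, θy] at hg; exact absurd hg (by decide)

theorem θ_surj : Function.Surjective θ := by
  have hrange : θ.range = ⊤ := by
    rw [eq_top_iff, ← Equiv.Perm.closure_isSwap]
    refine (Subgroup.closure_le _).mpr ?_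
    rintro σ ⟨i, j, hij, rfl⟩
    fin_cases i <;> fin_cases j
    · simp at hij
    · exact ⟨csA.simple 0, by rw [θx]; decide⟩
    · exact ⟨csA.simple 0 * (csA.simple 1 * csA.simple 0), by
        rw [map_mul, map_mul, θx, θy]; decide⟩
    · exact ⟨csA.simple 0, by rw [θx]; decide⟩
    · simp at hij
    · exact ⟨csA.simple 1, by rw [θy]; decide⟩
    · exact ⟨csA.simple 0 * (csA.simple 1 * csA.simple 0), by
        rw [map_mul, map_mul, θx, θy]; decide⟩
    · exact ⟨csA.simple 1, by rw [θy]; decide⟩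
    · simp at hij
  intro σ
  have : σ ∈ θ.range := hrange ▸ Subgroup.mem_top σ
  exact this

noncomputable def eS3 : A2.Group ≃* Equiv.Perm (Fin 3) :=
  MulEquiv.ofBijective θ ⟨θ_inj, θ_surj⟩

theorem eS3_apply (z : A2.Group) : eS3 z = θ z := rfl

theorem eS3_x : eS3 (csA.simple 0) = Equiv.swap 0 1 := θx
theorem eS3_y : eS3 (csA.simple 1) = Equiv.swap 1 2 := θy

end A2G


/-! ### The action of `Sym₃` on `W(D₄)` by diagram automorphisms -/

def emb : Fin 3 → Fin 4 := ![0, 2, 3]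

def e3 : Fin 3 ≃ {x : Fin 4 // x ≠ 1} where
  toFun k := ⟨emb k, by fin_cases k <;> decide⟩
  invFun x := ![0, 0, 1, 2] x.1
  left_inv := by decide
  right_inv := by decide

def piH : Equiv.Perm (Fin 3) →* Equiv.Perm (Fin 4) := Equiv.Perm.extendDomainHom e3

theorem piH_one (σ : Equiv.Perm (Fin 3)) : piH σ 1 = 1 :=
  σ.extendDomain_apply_not_subtype _ (by simp)

theorem piH_emb (σ : Equiv.Perm (Fin 3)) (k : Fin 3) : piH σ (emb k) = emb (σ k) := by
  have h : piH σ (e3 k).1 = (e3 (σ k)).1 := by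
    rw [show (piH σ) = σ.extendDomain e3 from rfl, σ.extendDomain_apply_subtype e3 (e3 k).2]
    simp
  simpa [e3] using h

theorem fin4_cases (i : Fin 4) : i = 1 ∨ ∃ k, emb k = i := by
  fin_cases i
  · exact Or.inr ⟨0, rfl⟩
  · exact Or.inl rfl
  · exact Or.inr ⟨1, rfl⟩
  · exact Or.inr ⟨2, rfl⟩

theorem Memb (k l : Fin 3) : coxMatD4.M (emb k) (emb l) = if k = l then 1 else 2 := by
  fin_cases k <;> fin_cases l <;> rfl

theorem M1emb (k : Fin 3) : coxMatD4.M 1 (emb k) = 3 ∧ coxMatD4.M (emb k) 1 = 3 := by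
  fin_cases k <;> exact ⟨rfl, rfl⟩

theorem hM (σ : Equiv.Perm (Fin 3)) (i j : Fin 4) :
    coxMatD4.M (piH σ i) (piH σ j) = coxMatD4.M i j := by
  rcases fin4_cases i with rfl | ⟨k, rfl⟩ <;> rcases fin4_cases j with rfl | ⟨l, rfl⟩
  · rw [piH_one]
  · rw [piH_one, piH_emb, (M1emb (σ l)).1, (M1emb l).1]
  · rw [piH_one, piH_emb, (M1emb (σ k)).2, (M1emb k).2]
  · rw [piH_emb, piH_emb, Memb, Memb]
    by_cases h : k = l
    · rw [if_pos h, if_pos (by rw [h])]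
    · rw [if_neg h, if_neg (fun hc => h (σ.injective hc))]

def Aσ (σ : Equiv.Perm (Fin 3)) : coxMatD4.Group →* coxMatD4.Group :=
  csD.lift ⟨fun i => csD.simple (piH σ i), by
    intro i j
    have h := csD.simple_mul_simple_pow (piH σ i) (piH σ j)
    rwa [hM σ i j] at h⟩

theorem Aσ_simple (σ : Equiv.Perm (Fin 3)) (i : Fin 4) :
    Aσ σ (csD.simple i) = csD.simple (piH σ i) := csD.lift_apply_simple _ i

theorem Aσ_comp (σ τ : Equiv.Perm (Fin 3)) : (Aσ σ).comp (Aσ τ) = Aσ (σ * τ) := by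
  refine csD.ext_simple fun i => ?_
  rw [MonoidHom.comp_apply, Aσ_simple, Aσ_simple, Aσ_simple, map_mul]
  rfl

theorem Aσ_id : Aσ 1 = MonoidHom.id coxMatD4.Group := by
  refine csD.ext_simple fun i => ?_
  rw [Aσ_simple, map_one]
  rfl

noncomputable def φ : Equiv.Perm (Fin 3) →* MulAut coxMatD4.Group where
  toFun σ := MonoidHom.toMulEquiv (Aσ σ) (Aσ σ⁻¹)
    (by rw [Aσ_comp, inv_mul_cancel, Aσ_id])
    (by rw [Aσ_comp, mul_inv_cancel, Aσ_id])
  map_one' := by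
    ext v
    show Aσ 1 v = v
    rw [Aσ_id]; rfl
  map_mul' σ τ := by
    ext v
    show Aσ (σ * τ) v = Aσ σ (Aσ τ v)
    rw [← Aσ_comp]; rfl

theorem φ_simple (σ : Equiv.Perm (Fin 3)) (i : Fin 4) :
    φ σ (csD.simple i) = csD.simple (piH σ i) := Aσ_simple σ i


/-! ### The semidirect product and the map from `W(F₄)` -/

def σc : Equiv.Perm (Fin 3) := Equiv.swap 1 2
def σd : Equiv.Perm (Fin 3) := Equiv.swap 0 2

theorem phic (i : Fin 4) : φ σc (csD.simple i) = csD.simple (piH σc i) := φ_simple σc i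

theorem phic0 : φ σc (csD.simple 0) = csD.simple 0 := by
  rw [φ_simple, show piH σc 0 = 0 by decide]
theorem phic1 : φ σc (csD.simple 1) = csD.simple 1 := by
  rw [φ_simple, show piH σc 1 = 1 by decide]
theorem phic2 : φ σc (csD.simple 2) = csD.simple 3 := by
  rw [φ_simple, show piH σc 2 = 3 by decide]
theorem phic3 : φ σc (csD.simple 3) = csD.simple 2 := by
  rw [φ_simple, show piH σc 3 = 2 by decide]
theorem phid0 : φ σd (csD.simple 0) = csD.simple 3 := by
  rw [φ_simple, show piH σd 0 = 3 by decide]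
theorem phid1 : φ σd (csD.simple 1) = csD.simple 1 := by
  rw [φ_simple, show piH σd 1 = 1 by decide]
theorem phid2 : φ σd (csD.simple 2) = csD.simple 2 := by
  rw [φ_simple, show piH σd 2 = 2 by decide]
theorem phid3 : φ σd (csD.simple 3) = csD.simple 0 := by
  rw [φ_simple, show piH σd 3 = 0 by decide]

theorem inr_mul_inl (g : Equiv.Perm (Fin 3)) (n : coxMatD4.Group) :
    (inr g : coxMatD4.Group ⋊[φ] Equiv.Perm (Fin 3)) * inl n = inl (φ g n) * inr g := by
  rw [inl_aut]
  simp only [mul_assoc, ← map_mul, inv_mul_cancel, map_one, mul_one]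

theorem sandwich (g : Equiv.Perm (Fin 3)) (hg : g⁻¹ = g) (n : coxMatD4.Group) :
    (inr g : coxMatD4.Group ⋊[φ] Equiv.Perm (Fin 3)) * (inl n * inr g) = inl (φ g n) := by
  have h := inl_aut (φ := φ) g n
  rw [hg] at h
  rw [← mul_assoc]
  exact h.symm

theorem σc_inv : σc⁻¹ = σc := by decide
theorem σd_inv : σd⁻¹ = σd := by decide

theorem mixed2 (n : coxMatD4.Group) (g : Equiv.Perm (Fin 3)) (hn : φ g n = n)
    (h2 : n * n = 1) (hg : g * g = 1) :
    ((inl n : coxMatD4.Group ⋊[φ] Equiv.Perm (Fin 3)) * inr g) ^ 2 = 1 := by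
  rw [pow_two]
  calc (inl n * inr g) * (inl n * inr g)
      = inl n * ((inr g * inl n) * inr g) := by simp only [mul_assoc]
  _ = inl n * ((inl (φ g n) * inr g) * inr g) := by rw [inr_mul_inl]
  _ = inl (n * n) * inr (g * g) := by
        rw [hn, map_mul, map_mul]; simp only [mul_assoc]
  _ = 1 := by rw [h2, hg, map_one, map_one, one_mul]

noncomputable def fmap : Fin 4 → coxMatD4.Group ⋊[φ] Equiv.Perm (Fin 3) :=
  ![inl (csD.simple 1), inl (csD.simple 2), inr σc, inr σd]

theorem inl_pow_rel (n m : coxMatD4.Group) (k : ℕ) (h : (n * m) ^ k = 1) :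
    ((inl n : coxMatD4.Group ⋊[φ] Equiv.Perm (Fin 3)) * inl m) ^ k = 1 := by
  rw [← map_mul, ← map_pow, h, map_one]

theorem inr_pow_rel (g g' : Equiv.Perm (Fin 3)) (k : ℕ) (h : (g * g') ^ k = 1) :
    ((inr g : coxMatD4.Group ⋊[φ] Equiv.Perm (Fin 3)) * inr g') ^ k = 1 := by
  rw [← map_mul, ← map_pow, h, map_one]

theorem fmap_liftable : CoxeterMatrix.F₄.IsLiftable fmap := by
  intro i j
  fin_cases i <;> fin_cases j
  · show ((inl (csD.simple 1) : _ ⋊[φ] _) * inl (csD.simple 1)) ^ 1 = 1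
    exact inl_pow_rel _ _ 1 (by rw [pow_one]; exact csD.simple_mul_simple_self 1)
  · show ((inl (csD.simple 1) : _ ⋊[φ] _) * inl (csD.simple 2)) ^ 3 = 1
    exact inl_pow_rel _ _ 3 (csD.simple_mul_simple_pow 1 2)
  · show ((inl (csD.simple 1) : _ ⋊[φ] _) * inr σc) ^ 2 = 1
    exact mixed2 _ _ phic1 (csD.simple_mul_simple_self 1) (by decide)
  · show ((inl (csD.simple 1) : _ ⋊[φ] _) * inr σd) ^ 2 = 1
    exact mixed2 _ _ phid1 (csD.simple_mul_simple_self 1) (by decide)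
  · show ((inl (csD.simple 2) : _ ⋊[φ] _) * inl (csD.simple 1)) ^ 3 = 1
    exact inl_pow_rel _ _ 3 (csD.simple_mul_simple_pow 2 1)
  · show ((inl (csD.simple 2) : _ ⋊[φ] _) * inl (csD.simple 2)) ^ 1 = 1
    exact inl_pow_rel _ _ 1 (by rw [pow_one]; exact csD.simple_mul_simple_self 2)
  · show ((inl (csD.simple 2) : _ ⋊[φ] _) * inr σc) ^ 4 = 1
    have hsq : ((inl (csD.simple 2) : _ ⋊[φ] _) * inr σc) ^ 2 = inl (csD.simple 2 * csD.simple 3) := by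
      rw [pow_two]
      calc (inl (csD.simple 2) * inr σc) * (inl (csD.simple 2) * inr σc)
          = inl (csD.simple 2) * ((inr σc * inl (csD.simple 2)) * inr σc) := by
            simp only [mul_assoc]
      _ = inl (csD.simple 2) * ((inl (φ σc (csD.simple 2)) * inr σc) * inr σc) := by
            rw [inr_mul_inl]
      _ = inl (csD.simple 2) * (inl (csD.simple 3) * inr (σc * σc)) := by
            rw [phic2, map_mul]; simp only [mul_assoc]
      _ = inl (csD.simple 2 * csD.simple 3) := by
            rw [show σc * σc = 1 by decide, map_one, mul_one, ← map_mul]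
    exact pow_four_of_sq hsq (by rw [← map_pow,
      show (csD.simple 2 * csD.simple 3) ^ 2 = 1 from csD.simple_mul_simple_pow 2 3, map_one])
  · show ((inl (csD.simple 2) : _ ⋊[φ] _) * inr σd) ^ 2 = 1
    exact mixed2 _ _ phid2 (csD.simple_mul_simple_self 2) (by decide)
  · show ((inr σc : _ ⋊[φ] _) * inl (csD.simple 1)) ^ 2 = 1
    exact swap_pow (mixed2 _ _ phic1 (csD.simple_mul_simple_self 1) (by decide))
  · show ((inr σc : _ ⋊[φ] _) * inl (csD.simple 2)) ^ 4 = 1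
    refine swap_pow ?_
    show ((inl (csD.simple 2) : _ ⋊[φ] _) * inr σc) ^ 4 = 1
    have hsq : ((inl (csD.simple 2) : _ ⋊[φ] _) * inr σc) ^ 2 = inl (csD.simple 2 * csD.simple 3) := by
      rw [pow_two]
      calc (inl (csD.simple 2) * inr σc) * (inl (csD.simple 2) * inr σc)
          = inl (csD.simple 2) * ((inr σc * inl (csD.simple 2)) * inr σc) := by
            simp only [mul_assoc]
      _ = inl (csD.simple 2) * ((inl (φ σc (csD.simple 2)) * inr σc) * inr σc) := by
            rw [inr_mul_inl]
      _ = inl (csD.simple 2) * (inl (csD.simple 3) * inr (σc * σc)) := by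
            rw [phic2, map_mul]; simp only [mul_assoc]
      _ = inl (csD.simple 2 * csD.simple 3) := by
            rw [show σc * σc = 1 by decide, map_one, mul_one, ← map_mul]
    exact pow_four_of_sq hsq (by rw [← map_pow,
      show (csD.simple 2 * csD.simple 3) ^ 2 = 1 from csD.simple_mul_simple_pow 2 3, map_one])
  · show ((inr σc : _ ⋊[φ] _) * inr σc) ^ 1 = 1
    exact inr_pow_rel _ _ 1 (by decide)
  · show ((inr σc : _ ⋊[φ] _) * inr σd) ^ 3 = 1
    exact inr_pow_rel _ _ 3 (by decide)
  · show ((inr σd : _ ⋊[φ] _) * inl (csD.simple 1)) ^ 2 = 1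
    exact swap_pow (mixed2 _ _ phid1 (csD.simple_mul_simple_self 1) (by decide))
  · show ((inr σd : _ ⋊[φ] _) * inl (csD.simple 2)) ^ 2 = 1
    exact swap_pow (mixed2 _ _ phid2 (csD.simple_mul_simple_self 2) (by decide))
  · show ((inr σd : _ ⋊[φ] _) * inr σc) ^ 3 = 1
    exact inr_pow_rel _ _ 3 (by decide)
  · show ((inr σd : _ ⋊[φ] _) * inr σd) ^ 1 = 1
    exact inr_pow_rel _ _ 1 (by decide)

noncomputable def fF : CoxeterMatrix.F₄.Group →* coxMatD4.Group ⋊[φ] Equiv.Perm (Fin 3) :=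
  csF.lift ⟨fmap, fmap_liftable⟩

theorem fFa : fF (csF.simple 0) = inl (csD.simple 1) := csF.lift_apply_simple _ 0
theorem fFb : fF (csF.simple 1) = inl (csD.simple 2) := csF.lift_apply_simple _ 1
theorem fFc : fF (csF.simple 2) = inr σc := csF.lift_apply_simple _ 2
theorem fFd : fF (csF.simple 3) = inr σd := csF.lift_apply_simple _ 3


/-! ### The map from `W(D₄)` to `W(F₄)` -/

def gval : Fin 4 → CoxeterMatrix.F₄.Group :=
  ![csF.simple 3 * (csF.simple 2 * (csF.simple 1 * (csF.simple 2 * csF.simple 3))), csF.simple 0, csF.simple 1, csF.simple 2 * (csF.simple 1 * csF.simple 2)]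

theorem gval_liftable : coxMatD4.IsLiftable gval := by
  intro i j
  fin_cases i <;> fin_cases j
  · show ((csF.simple 3 * (csF.simple 2 * (csF.simple 1 * (csF.simple 2 * csF.simple 3)))) * (csF.simple 3 * (csF.simple 2 * (csF.simple 1 * (csF.simple 2 * csF.simple 3))))) ^ 1 = 1
    rw [pow_one]; simp only [mul_assoc]; exact F4W.w_PP
  · show ((csF.simple 3 * (csF.simple 2 * (csF.simple 1 * (csF.simple 2 * csF.simple 3)))) * (csF.simple 0)) ^ 3 = 1
    rw [pow_succ, pow_succ, pow_one]; simp only [mul_assoc]; exact F4W.w_PaPaPa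
  · show ((csF.simple 3 * (csF.simple 2 * (csF.simple 1 * (csF.simple 2 * csF.simple 3)))) * (csF.simple 1)) ^ 2 = 1
    rw [pow_two]; simp only [mul_assoc]; exact F4W.w_PbPb
  · show ((csF.simple 3 * (csF.simple 2 * (csF.simple 1 * (csF.simple 2 * csF.simple 3)))) * (csF.simple 2 * (csF.simple 1 * csF.simple 2))) ^ 2 = 1
    rw [pow_two]; simp only [mul_assoc]; exact F4W.w_PQPQ
  · show ((csF.simple 0) * (csF.simple 3 * (csF.simple 2 * (csF.simple 1 * (csF.simple 2 * csF.simple 3))))) ^ 3 = 1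
    refine swap_pow ?_
    rw [pow_succ, pow_succ, pow_one]; simp only [mul_assoc]; exact F4W.w_PaPaPa
  · show ((csF.simple 0) * (csF.simple 0)) ^ 1 = 1
    rw [pow_one]; exact csF.simple_mul_simple_self 0
  · show ((csF.simple 0) * (csF.simple 1)) ^ 3 = 1
    exact csF.simple_mul_simple_pow 0 1
  · show ((csF.simple 0) * (csF.simple 2 * (csF.simple 1 * csF.simple 2))) ^ 3 = 1
    rw [pow_succ, pow_succ, pow_one]; simp only [mul_assoc]; exact F4W.w_aQaQaQ
  · show ((csF.simple 1) * (csF.simple 3 * (csF.simple 2 * (csF.simple 1 * (csF.simple 2 * csF.simple 3))))) ^ 2 = 1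
    refine swap_pow ?_
    rw [pow_two]; simp only [mul_assoc]; exact F4W.w_PbPb
  · show ((csF.simple 1) * (csF.simple 0)) ^ 3 = 1
    refine swap_pow ?_
    exact csF.simple_mul_simple_pow 0 1
  · show ((csF.simple 1) * (csF.simple 1)) ^ 1 = 1
    rw [pow_one]; exact csF.simple_mul_simple_self 1
  · show ((csF.simple 1) * (csF.simple 2 * (csF.simple 1 * csF.simple 2))) ^ 2 = 1
    rw [pow_two]; simp only [mul_assoc]; exact F4W.w_bQbQ
  · show ((csF.simple 2 * (csF.simple 1 * csF.simple 2)) * (csF.simple 3 * (csF.simple 2 * (csF.simple 1 * (csF.simple 2 * csF.simple 3))))) ^ 2 = 1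
    refine swap_pow ?_
    rw [pow_two]; simp only [mul_assoc]; exact F4W.w_PQPQ
  · show ((csF.simple 2 * (csF.simple 1 * csF.simple 2)) * (csF.simple 0)) ^ 3 = 1
    refine swap_pow ?_
    rw [pow_succ, pow_succ, pow_one]; simp only [mul_assoc]; exact F4W.w_aQaQaQ
  · show ((csF.simple 2 * (csF.simple 1 * csF.simple 2)) * (csF.simple 1)) ^ 2 = 1
    refine swap_pow ?_
    rw [pow_two]; simp only [mul_assoc]; exact F4W.w_bQbQ
  · show ((csF.simple 2 * (csF.simple 1 * csF.simple 2)) * (csF.simple 2 * (csF.simple 1 * csF.simple 2))) ^ 1 = 1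
    rw [pow_one]; simp only [mul_assoc]; exact F4W.w_QQ

def g1 : coxMatD4.Group →* CoxeterMatrix.F₄.Group := csD.lift ⟨gval, gval_liftable⟩

theorem g1_0 : g1 (csD.simple 0) = csF.simple 3 * (csF.simple 2 * (csF.simple 1 * (csF.simple 2 * csF.simple 3))) := csD.lift_apply_simple _ 0
theorem g1_1 : g1 (csD.simple 1) = csF.simple 0 := csD.lift_apply_simple _ 1
theorem g1_2 : g1 (csD.simple 2) = csF.simple 1 := csD.lift_apply_simple _ 2
theorem g1_3 : g1 (csD.simple 3) = csF.simple 2 * (csF.simple 1 * csF.simple 2) := csD.lift_apply_simple _ 3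

def g2map : Fin 2 → CoxeterMatrix.F₄.Group :=
  ![csF.simple 2 * (csF.simple 3 * csF.simple 2), csF.simple 2]

theorem g2map_liftable : A2.IsLiftable g2map := by
  intro i j
  fin_cases i <;> fin_cases j
  · show ((csF.simple 2 * (csF.simple 3 * csF.simple 2)) *
      (csF.simple 2 * (csF.simple 3 * csF.simple 2))) ^ 1 = 1
    rw [pow_one]
    simp only [mul_assoc, CoxeterSystem.simple_mul_simple_cancel_left,
      CoxeterSystem.simple_mul_simple_self]
  · show ((csF.simple 2 * (csF.simple 3 * csF.simple 2)) * csF.simple 2) ^ 3 = 1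
    rw [show (csF.simple 2 * (csF.simple 3 * csF.simple 2)) * csF.simple 2
        = csF.simple 2 * csF.simple 3 by
      simp only [mul_assoc, CoxeterSystem.simple_mul_simple_cancel_left,
        CoxeterSystem.simple_mul_simple_self, mul_one]]
    exact csF.simple_mul_simple_pow 2 3
  · show (csF.simple 2 * (csF.simple 2 * (csF.simple 3 * csF.simple 2))) ^ 3 = 1
    rw [show csF.simple 2 * (csF.simple 2 * (csF.simple 3 * csF.simple 2))
        = csF.simple 3 * csF.simple 2 from csF.simple_mul_simple_cancel_left 2]
    exact csF.simple_mul_simple_pow 3 2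
  · show (csF.simple 2 * csF.simple 2) ^ 1 = 1
    rw [pow_one]; exact csF.simple_mul_simple_self 2

def g2' : A2.Group →* CoxeterMatrix.F₄.Group := csA.lift ⟨g2map, g2map_liftable⟩

theorem g2'_x : g2' (csA.simple 0) = csF.simple 2 * (csF.simple 3 * csF.simple 2) :=
  csA.lift_apply_simple _ 0
theorem g2'_y : g2' (csA.simple 1) = csF.simple 2 := csA.lift_apply_simple _ 1

noncomputable def g2 : Equiv.Perm (Fin 3) →* CoxeterMatrix.F₄.Group :=
  g2'.comp A2G.eS3.symm.toMonoidHom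

theorem g2_apply_e (z : A2.Group) : g2 (A2G.eS3 z) = g2' z := by
  show g2' (A2G.eS3.symm (A2G.eS3 z)) = g2' z
  rw [MulEquiv.symm_apply_apply]

theorem esymm_c : A2G.eS3.symm σc = csA.simple 1 := by
  rw [MulEquiv.symm_apply_eq, A2G.eS3_y]; rfl

theorem esymm_d : A2G.eS3.symm σd = csA.simple 0 * (csA.simple 1 * csA.simple 0) := by
  rw [MulEquiv.symm_apply_eq, map_mul, map_mul, A2G.eS3_x, A2G.eS3_y]
  decide

theorem g2c : g2 σc = csF.simple 2 := by
  show g2' (A2G.eS3.symm σc) = _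
  rw [esymm_c, g2'_y]

theorem g2d : g2 σd = csF.simple 3 := by
  show g2' (A2G.eS3.symm σd) = _
  rw [esymm_d, map_mul, map_mul, g2'_x, g2'_y]
  rw [show (csF.simple 2 * (csF.simple 3 * csF.simple 2)) * (csF.simple 2 *
      (csF.simple 2 * (csF.simple 3 * csF.simple 2)))
      = csF.simple 2 * (csF.simple 3 * (csF.simple 2 * (csF.simple 3 * csF.simple 2))) by
    simp only [mul_assoc, CoxeterSystem.simple_mul_simple_cancel_left]]
  exact HCw3


/-! ### Compatibility and the isomorphism -/

theorem memc_eq : g1.comp (φ σc).toMonoidHom = (MulAut.conj (g2 σc)).toMonoidHom.comp g1 := by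
  refine csD.ext_simple fun i => ?_
  simp only [MonoidHom.comp_apply, MulEquiv.coe_toMonoidHom, MulAut.conj_apply]
  fin_cases i
  · show g1 ((φ σc) (csD.simple 0)) = g2 σc * g1 (csD.simple 0) * (g2 σc)⁻¹
    rw [phic0, g1_0, g2c, CoxeterSystem.inv_simple, mul_assoc]
    exact HC1.symm
  · show g1 ((φ σc) (csD.simple 1)) = g2 σc * g1 (csD.simple 1) * (g2 σc)⁻¹
    rw [phic1, g1_1, g2c, CoxeterSystem.inv_simple, mul_assoc, F4W.Pca,
      CoxeterSystem.simple_mul_simple_self, mul_one]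
  · show g1 ((φ σc) (csD.simple 2)) = g2 σc * g1 (csD.simple 2) * (g2 σc)⁻¹
    rw [phic2, g1_3, g1_2, g2c, CoxeterSystem.inv_simple, mul_assoc]
  · show g1 ((φ σc) (csD.simple 3)) = g2 σc * g1 (csD.simple 3) * (g2 σc)⁻¹
    rw [phic3, g1_2, g1_3, g2c, CoxeterSystem.inv_simple]
    simp only [mul_assoc, CoxeterSystem.simple_mul_simple_cancel_left,
      CoxeterSystem.simple_mul_simple_self, mul_one]

theorem memd_eq : g1.comp (φ σd).toMonoidHom = (MulAut.conj (g2 σd)).toMonoidHom.comp g1 := by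
  refine csD.ext_simple fun i => ?_
  simp only [MonoidHom.comp_apply, MulEquiv.coe_toMonoidHom, MulAut.conj_apply]
  fin_cases i
  · show g1 ((φ σd) (csD.simple 0)) = g2 σd * g1 (csD.simple 0) * (g2 σd)⁻¹
    rw [phid0, g1_3, g1_0, g2d, CoxeterSystem.inv_simple]
    simp only [mul_assoc, CoxeterSystem.simple_mul_simple_cancel_left,
      CoxeterSystem.simple_mul_simple_self, mul_one]
  · show g1 ((φ σd) (csD.simple 1)) = g2 σd * g1 (csD.simple 1) * (g2 σd)⁻¹
    rw [phid1, g1_1, g2d, CoxeterSystem.inv_simple, mul_assoc, F4W.Pda,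
      CoxeterSystem.simple_mul_simple_self, mul_one]
  · show g1 ((φ σd) (csD.simple 2)) = g2 σd * g1 (csD.simple 2) * (g2 σd)⁻¹
    rw [phid2, g1_2, g2d, CoxeterSystem.inv_simple, mul_assoc, F4W.Pdb,
      CoxeterSystem.simple_mul_simple_self, mul_one]
  · show g1 ((φ σd) (csD.simple 3)) = g2 σd * g1 (csD.simple 3) * (g2 σd)⁻¹
    rw [phid3, g1_0, g1_3, g2d, CoxeterSystem.inv_simple]
    simp only [mul_assoc]

noncomputable def K : Subgroup (Equiv.Perm (Fin 3)) where
  carrier := {σ | g1.comp (φ σ).toMonoidHom = (MulAut.conj (g2 σ)).toMonoidHom.comp g1}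
  one_mem' := by
    show g1.comp (φ 1).toMonoidHom = (MulAut.conj (g2 1)).toMonoidHom.comp g1
    rw [map_one, map_one]
    ext v
    simp
  mul_mem' := by
    intro σ τ hσ hτ
    have hσ' : ∀ v, g1 (φ σ v) = g2 σ * g1 v * (g2 σ)⁻¹ := fun v => by
      have h := DFunLike.congr_fun hσ v
      simpa only [MonoidHom.comp_apply, MulEquiv.coe_toMonoidHom, MulAut.conj_apply] using h
    have hτ' : ∀ v, g1 (φ τ v) = g2 τ * g1 v * (g2 τ)⁻¹ := fun v => by
      have h := DFunLike.congr_fun hτ v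
      simpa only [MonoidHom.comp_apply, MulEquiv.coe_toMonoidHom, MulAut.conj_apply] using h
    show g1.comp (φ (σ * τ)).toMonoidHom = (MulAut.conj (g2 (σ * τ))).toMonoidHom.comp g1
    refine MonoidHom.ext fun v => ?_
    simp only [MonoidHom.comp_apply, MulEquiv.coe_toMonoidHom, MulAut.conj_apply]
    rw [map_mul φ, map_mul g2, MulAut.mul_apply, hσ' (φ τ v), hτ' v]
    group
  inv_mem' := by
    intro σ hσ
    have hσ' : ∀ v, g1 (φ σ v) = g2 σ * g1 v * (g2 σ)⁻¹ := fun v => by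
      have h := DFunLike.congr_fun hσ v
      simpa only [MonoidHom.comp_apply, MulEquiv.coe_toMonoidHom, MulAut.conj_apply] using h
    show g1.comp (φ σ⁻¹).toMonoidHom = (MulAut.conj (g2 σ⁻¹)).toMonoidHom.comp g1
    refine MonoidHom.ext fun v => ?_
    simp only [MonoidHom.comp_apply, MulEquiv.coe_toMonoidHom, MulAut.conj_apply]
    rw [map_inv g2, inv_inv]
    have h2 := hσ' (φ σ⁻¹ v)
    rw [show φ σ (φ σ⁻¹ v) = v by
      rw [← MulAut.mul_apply, ← map_mul, mul_inv_cancel, map_one, MulAut.one_apply]] at h2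
    rw [h2]
    group

theorem memc : σc ∈ K := memc_eq
theorem memd : σd ∈ K := memd_eq

theorem mem01 : Equiv.swap 0 1 ∈ K := by
  rw [show (Equiv.swap 0 1 : Equiv.Perm (Fin 3)) = σc * (σd * σc) by decide]
  exact mul_mem memc (mul_mem memd memc)

theorem Ktop : K = ⊤ := by
  rw [eq_top_iff, ← Equiv.Perm.closure_isSwap]
  refine (Subgroup.closure_le _).mpr ?_
  rintro σ ⟨i, j, hij, rfl⟩
  fin_cases i <;> fin_cases j
  · simp at hij
  · exact mem01
  · exact memd
  · rw [show Equiv.swap ((fun i => i) (⟨1, by omega⟩ : Fin 3)) ((fun i => i) (⟨0, by omega⟩ : Fin 3))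
      = Equiv.swap 0 1 by decide]
    exact mem01
  · simp at hij
  · exact memc
  · rw [show Equiv.swap ((fun i => i) (⟨2, by omega⟩ : Fin 3)) ((fun i => i) (⟨0, by omega⟩ : Fin 3))
      = σd by decide]
    exact memd
  · rw [show Equiv.swap ((fun i => i) (⟨2, by omega⟩ : Fin 3)) ((fun i => i) (⟨1, by omega⟩ : Fin 3))
      = σc by decide]
    exact memc
  · simp at hij

theorem hcompat : ∀ gp : Equiv.Perm (Fin 3),
    g1.comp (φ gp).toMonoidHom = (MulAut.conj (g2 gp)).toMonoidHom.comp g1 := fun gp => by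
  have h : gp ∈ K := Ktop ▸ Subgroup.mem_top gp
  exact h

noncomputable def hH : coxMatD4.Group ⋊[φ] Equiv.Perm (Fin 3) →* CoxeterMatrix.F₄.Group :=
  SemidirectProduct.lift g1 g2 hcompat

theorem hf : hH.comp fF = MonoidHom.id _ := by
  refine csF.ext_simple fun i => ?_
  simp only [MonoidHom.comp_apply, MonoidHom.id_apply]
  fin_cases i
  · show hH (fF (csF.simple 0)) = csF.simple 0
    rw [fFa, show hH (inl (csD.simple 1)) = g1 _ from SemidirectProduct.lift_inl _ _ _ _]; exact g1_1
  · show hH (fF (csF.simple 1)) = csF.simple 1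
    rw [fFb, show hH (inl (csD.simple 2)) = g1 _ from SemidirectProduct.lift_inl _ _ _ _]; exact g1_2
  · show hH (fF (csF.simple 2)) = csF.simple 2
    rw [fFc, show hH (inr σc) = g2 _ from SemidirectProduct.lift_inr _ _ _ _]; exact g2c
  · show hH (fF (csF.simple 3)) = csF.simple 3
    rw [fFd, show hH (inr σd) = g2 _ from SemidirectProduct.lift_inr _ _ _ _]; exact g2d

theorem fg1 : fF.comp g1 = (inl : coxMatD4.Group →* coxMatD4.Group ⋊[φ] Equiv.Perm (Fin 3)) := by
  refine csD.ext_simple fun i => ?_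
  simp only [MonoidHom.comp_apply]
  fin_cases i
  · show fF (g1 (csD.simple 0)) = inl (csD.simple 0)
    rw [g1_0]
    simp only [map_mul, fFa, fFb, fFc, fFd]
    rw [show (inr σc : _ ⋊[φ] _) * (inl (csD.simple 2) * (inr σc * inr σd))
        = (inr σc * (inl (csD.simple 2) * inr σc)) * inr σd by simp only [mul_assoc],
      sandwich σc σc_inv, phic2, sandwich σd σd_inv, phid3]
  · show fF (g1 (csD.simple 1)) = inl (csD.simple 1)
    rw [g1_1, fFa]
  · show fF (g1 (csD.simple 2)) = inl (csD.simple 2)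
    rw [g1_2, fFb]
  · show fF (g1 (csD.simple 3)) = inl (csD.simple 3)
    rw [g1_3]
    simp only [map_mul, fFb, fFc]
    rw [sandwich σc σc_inv, phic2]

theorem fg2 : fF.comp g2 = (inr : Equiv.Perm (Fin 3) →* coxMatD4.Group ⋊[φ] Equiv.Perm (Fin 3)) := by
  have hsurj : Function.Surjective (A2G.eS3.toMonoidHom : A2.Group →* Equiv.Perm (Fin 3)) :=
    A2G.eS3.surjective
  refine (MonoidHom.cancel_right hsurj).mp ?_
  refine csA.ext_simple fun i => ?_
  simp only [MonoidHom.comp_apply, MulEquiv.coe_toMonoidHom]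
  rw [g2_apply_e]
  fin_cases i
  · show fF (g2' (csA.simple 0)) = inr (A2G.eS3 (csA.simple 0))
    rw [g2'_x]
    simp only [map_mul, fFc, fFd]
    rw [← map_mul, ← map_mul, A2G.eS3_x]
    exact congrArg inr (by decide)
  · show fF (g2' (csA.simple 1)) = inr (A2G.eS3 (csA.simple 1))
    rw [g2'_y, fFc, A2G.eS3_y]
    rfl

theorem fh : fF.comp hH = MonoidHom.id _ := by
  refine SemidirectProduct.hom_ext ?_ ?_
  · rw [MonoidHom.comp_assoc, show hH.comp inl = g1 from SemidirectProduct.lift_comp_inl _ _ _,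
      MonoidHom.id_comp]
    exact fg1
  · rw [MonoidHom.comp_assoc, show hH.comp inr = g2 from SemidirectProduct.lift_comp_inr _ _ _,
      MonoidHom.id_comp]
    exact fg2

noncomputable def isoF : CoxeterMatrix.F₄.Group ≃* coxMatD4.Group ⋊[φ] Equiv.Perm (Fin 3) where
  toFun := fF
  invFun := hH
  left_inv := fun w => DFunLike.congr_fun hf w
  right_inv := fun z => DFunLike.congr_fun fh z
  map_mul' := map_mul fF

end Stmt9

/-- The Coxeter group `W(F₄)` is isomorphic to a semidirect product of the
Coxeter group `W(D₄)` by the symmetric group `Sym₃`. -/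
theorem stmt_9 :
    ∃ φ : Equiv.Perm (Fin 3) →* MulAut coxMatD4.Group,
      Nonempty (CoxeterMatrix.F₄.Group ≃* coxMatD4.Group ⋊[φ] Equiv.Perm (Fin 3)) :=
  ⟨Stmt9.φ, ⟨Stmt9.isoF⟩⟩
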